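/- There exists a graph G on vertex set ℤ (with some vertices of infinite degree) for which the independence ratio ᾱ(G) differs from limsup_{N→∞} ᾱ(G_N): namely, for G with edges {a,b} whenever a < 0 and b > −2a, one has ᾱ(G) ≤ 1/2 while limsup_{N→∞} ᾱ(G_N) ≥ 3/4. -/

import Mathlib

open Set Filter

def adjZ (a b : ℤ) : Prop := (a < 0 ∧ b > -2 * a) ∨ (b < 0 ∧ a > -2 * b)

lemma ncard_Icc_int (a b : ℤ) : (Set.Icc a b).ncard = (b + 1 - a).toNat := by
  rw [← Finset.coe_Icc, Set.ncard_coe_finset, Int.card_Icc]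

lemma tendsto_aux (c : ℝ) :
    Tendsto (fun N : ℕ => ((N:ℝ) + c) / (2*N + 1)) atTop (nhds (1/2)) := by
  have h : ∀ᶠ N : ℕ in atTop, ((N:ℝ) + c)/(2*(N:ℝ)+1) = (1 + c/N)/(2 + 1/N) := by
    filter_upwards [eventually_gt_atTop 0] with N hN
    have hN' : (N:ℝ) ≠ 0 := Nat.cast_ne_zero.mpr hN.ne'
    field_simp
  rw [Filter.tendsto_congr' h]
  have h1 : Tendsto (fun N : ℕ => 1 + c/(N:ℝ)) atTop (nhds 1) := by
    simpa using tendsto_const_nhds.add (tendsto_const_div_atTop_nhds_zero_nat c)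
  have h2 : Tendsto (fun N : ℕ => 2 + 1/(N:ℝ)) atTop (nhds 2) := by
    simpa using tendsto_const_nhds.add (tendsto_const_div_atTop_nhds_zero_nat (1:ℝ))
  have := h1.div h2 (by norm_num)
  exact this

lemma card_bound {S : Set ℤ} (hS : ∀ a ∈ S, ∀ b ∈ S, ¬ adjZ a b) :
    ∃ C : ℕ, ∀ N : ℕ, ((S ∩ Set.Icc (-(N:ℤ)) N).ncard : ℝ) ≤ (N:ℝ) + C + 1 := by
  by_cases hneg : ∃ a ∈ S, a < 0
  · obtain ⟨a0, ha0S, ha0⟩ := hneg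
    refine ⟨(-2*a0).toNat, fun N => ?_⟩
    have hsub : S ∩ Set.Icc (-(N:ℤ)) N ⊆ Set.Icc (-(N:ℤ)) ((-2*a0).toNat : ℤ) := by
      rintro b ⟨hbS, hb1, hb2⟩
      refine ⟨hb1, ?_⟩
      have := hS a0 ha0S b hbS
      have hble : b ≤ -2*a0 := by
        by_contra h
        exact this (Or.inl ⟨ha0, by omega⟩)
      omega
    have hcard := Set.ncard_le_ncard hsub (Set.finite_Icc _ _)
    rw [ncard_Icc_int] at hcard
    have : (S ∩ Set.Icc (-(N:ℤ)) N).ncard ≤ N + (-2*a0).toNat + 1 := by omega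
    calc ((S ∩ Set.Icc (-(N:ℤ)) N).ncard : ℝ) ≤ ((N + (-2*a0).toNat + 1 : ℕ) : ℝ) := by
          exact_mod_cast this
      _ = (N:ℝ) + (-2*a0).toNat + 1 := by push_cast; ring
  · refine ⟨0, fun N => ?_⟩
    push_neg at hneg
    have hsub : S ∩ Set.Icc (-(N:ℤ)) N ⊆ Set.Icc (0:ℤ) N := by
      rintro b ⟨hbS, hb1, hb2⟩
      exact ⟨hneg b hbS, hb2⟩
    have hcard := Set.ncard_le_ncard hsub (Set.finite_Icc _ _)
    rw [ncard_Icc_int] at hcard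
    have : (S ∩ Set.Icc (-(N:ℤ)) N).ncard ≤ N + 1 := by omega
    calc ((S ∩ Set.Icc (-(N:ℤ)) N).ncard : ℝ) ≤ ((N + 1 : ℕ) : ℝ) := by exact_mod_cast this
      _ = (N:ℝ) + (0:ℕ) + 1 := by push_cast; ring

lemma denom_card (N : ℕ) : (Set.Icc (-(N:ℤ)) (N:ℤ)).ncard = 2*N + 1 := by
  rw [ncard_Icc_int]; omega

theorem counterexample_infinite_degree :
    sSup {d : ℝ | ∃ S : Set ℤ, (∀ a ∈ S, ∀ b ∈ S, ¬ adjZ a b) ∧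
        d = Filter.limsup (fun N : ℕ =>
          ((S ∩ Set.Icc (-(N : ℤ)) (N : ℤ)).ncard : ℝ)
            / ((Set.Icc (-(N : ℤ)) (N : ℤ)).ncard : ℝ)) Filter.atTop} ≤ 1 / 2
    ∧ 3 / 4 ≤ Filter.limsup (fun N : ℕ =>
        ((sSup {k : ℕ | ∃ S ⊆ Set.Icc (-(N : ℤ)) (N : ℤ),
            (∀ a ∈ S, ∀ b ∈ S, ¬ adjZ a b) ∧ S.ncard = k} : ℕ) : ℝ)
          / ((Set.Icc (-(N : ℤ)) (N : ℤ)).ncard : ℝ)) Filter.atTop := by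
  constructor
  · -- first part
    apply Real.sSup_le _ (by norm_num)
    rintro d ⟨S, hS, rfl⟩
    obtain ⟨C, hC⟩ := card_bound hS
    set u := fun N : ℕ => ((S ∩ Set.Icc (-(N : ℤ)) (N : ℤ)).ncard : ℝ)
            / ((Set.Icc (-(N : ℤ)) (N : ℤ)).ncard : ℝ)
    set v := fun N : ℕ => ((N:ℝ) + ((C:ℝ) + 1)) / (2*N + 1) with hvdef
    have hv : Tendsto v atTop (nhds (1/2)) := tendsto_aux ((C:ℝ)+1)
    have huv : ∀ N, u N ≤ v N := by
      intro N
      have hd : ((Set.Icc (-(N : ℤ)) (N : ℤ)).ncard : ℝ) = 2*N+1 := by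
        rw [denom_card]; push_cast; ring
      have hpos : (0:ℝ) < 2*(N:ℝ)+1 := by positivity
      simp only [u, v, hd]
      gcongr
      have := hC N
      linarith
    calc limsup u atTop ≤ limsup v atTop := by
          refine Filter.limsup_le_limsup (Eventually.of_forall huv) ?_ ?_
          · apply Filter.IsBoundedUnder.isCoboundedUnder_le
            refine Filter.isBoundedUnder_of ⟨0, fun N => ?_⟩
            simp only [u]
            positivity
          · exact hv.isBoundedUnder_le
      _ = 1/2 := hv.limsup_eq
  · -- second part
    have hbdd : ∀ N : ℕ, BddAbove {k : ℕ | ∃ S ⊆ Set.Icc (-(N : ℤ)) (N : ℤ),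
        (∀ a ∈ S, ∀ b ∈ S, ¬ adjZ a b) ∧ S.ncard = k} := by
      intro N
      refine ⟨2*N+1, ?_⟩
      rintro k ⟨S, hsub, _, rfl⟩
      have := Set.ncard_le_ncard hsub (Set.finite_Icc _ _)
      rwa [denom_card] at this
    have hboundg : ∀ N : ℕ, ((sSup {k : ℕ | ∃ S ⊆ Set.Icc (-(N : ℤ)) (N : ℤ),
            (∀ a ∈ S, ∀ b ∈ S, ¬ adjZ a b) ∧ S.ncard = k} : ℕ) : ℝ)
          / ((Set.Icc (-(N : ℤ)) (N : ℤ)).ncard : ℝ) ≤ 1 := by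
      intro N
      have hne : {k : ℕ | ∃ S ⊆ Set.Icc (-(N : ℤ)) (N : ℤ),
          (∀ a ∈ S, ∀ b ∈ S, ¬ adjZ a b) ∧ S.ncard = k}.Nonempty :=
        ⟨0, ∅, Set.empty_subset _, by simp, by simp⟩
      have hsup : sSup {k : ℕ | ∃ S ⊆ Set.Icc (-(N : ℤ)) (N : ℤ),
          (∀ a ∈ S, ∀ b ∈ S, ¬ adjZ a b) ∧ S.ncard = k} ≤ 2*N+1 := by
        apply csSup_le hne
        rintro k ⟨S, hsub, _, rfl⟩
        have := Set.ncard_le_ncard hsub (Set.finite_Icc _ _)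
        rwa [denom_card] at this
      rw [div_le_one (by rw [denom_card]; positivity)]
      rw [denom_card]
      exact_mod_cast hsup
    refine Filter.le_limsup_of_frequently_le ?_ (Filter.isBoundedUnder_of ⟨1, hboundg⟩)
    rw [Filter.frequently_atTop]
    intro a
    set M := max a 1 with hM
    have hM1 : 1 ≤ M := le_max_right a 1
    refine ⟨2*M, by omega, ?_⟩
    set S0 : Set ℤ := Set.Icc (-(2*(M:ℤ))) (-(M:ℤ)) ∪ Set.Icc 0 (2*(M:ℤ)) with hS0
    have hsub : S0 ⊆ Set.Icc (-((2*M : ℕ):ℤ)) ((2*M : ℕ):ℤ) := by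
      rintro x (⟨h1, h2⟩ | ⟨h1, h2⟩) <;> constructor <;> push_cast <;> omega
    have hind : ∀ p ∈ S0, ∀ q ∈ S0, ¬ adjZ p q := by
      rintro p hp q hq (⟨h1, h2⟩ | ⟨h1, h2⟩)
      · rcases hp with ⟨hp1, hp2⟩ | ⟨hp1, hp2⟩ <;>
          rcases hq with ⟨hq1, hq2⟩ | ⟨hq1, hq2⟩ <;> omega
      · rcases hp with ⟨hp1, hp2⟩ | ⟨hp1, hp2⟩ <;>
          rcases hq with ⟨hq1, hq2⟩ | ⟨hq1, hq2⟩ <;> omega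
    have hdisj : Disjoint (Set.Icc (-(2*(M:ℤ))) (-(M:ℤ))) (Set.Icc 0 (2*(M:ℤ))) := by
      rw [Set.disjoint_left]
      rintro x ⟨h1, h2⟩ ⟨h3, h4⟩
      omega
    have hcard : S0.ncard = 3*M + 2 := by
      rw [hS0, Set.ncard_union_eq hdisj (Set.finite_Icc _ _) (Set.finite_Icc _ _),
        ncard_Icc_int, ncard_Icc_int]
      omega
    have hmem : 3*M + 2 ∈ {k : ℕ | ∃ S ⊆ Set.Icc (-((2*M : ℕ):ℤ)) ((2*M : ℕ):ℤ),
        (∀ a ∈ S, ∀ b ∈ S, ¬ adjZ a b) ∧ S.ncard = k} :=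
      ⟨S0, hsub, hind, hcard⟩
    have hsup : 3*M + 2 ≤ sSup {k : ℕ | ∃ S ⊆ Set.Icc (-((2*M : ℕ):ℤ)) ((2*M : ℕ):ℤ),
        (∀ a ∈ S, ∀ b ∈ S, ¬ adjZ a b) ∧ S.ncard = k} := le_csSup (hbdd (2*M)) hmem
    have hd : ((Set.Icc (-((2*M : ℕ):ℤ)) ((2*M : ℕ):ℤ)).ncard : ℝ) = 4*M+1 := by
      rw [denom_card]; push_cast; ring
    rw [hd, le_div_iff₀ (by positivity)]
    have : ((3*M + 2 : ℕ) : ℝ) ≤ (sSup {k : ℕ | ∃ S ⊆ Set.Icc (-((2*M : ℕ):ℤ)) ((2*M : ℕ):ℤ),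
        (∀ a ∈ S, ∀ b ∈ S, ¬ adjZ a b) ∧ S.ncard = k} : ℕ) := by exact_mod_cast hsup
    push_cast at this ⊢
    linarith
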